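/- arXiv:1804.09832 — 4 statements merged into one kernel-verified Lean document; each statement's English description precedes it below -/
import Mathlib

section
/- Let E = {x ∈ ℝⁿ : A x ≤ b} be a convex polyhedron and w ∈ E. Then the normal cone N_w(E) equals the set of all nonnegative linear combinations ∑_{i ∈ J(w)} λ_i a_i with λ_i ≥ 0, where a_i is the vector representing the i-th row of A (i.e. A_i x = ⟨a_i, x⟩) and J(w) is the set of active constraints at w. -/
open Filter Topology Metric Set

noncomputable section

abbrev Euc (n : ℕ) := EuclideanSpace ℝ (Fin n)

/-- Peano tangent cone of `E` at `a`. -/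
def PeanoTangentCone {n : ℕ} (E : Set (Euc n)) (a : Euc n) : Set (Euc n) :=
  {v | ∃ (x : ℕ → Euc n) (l : ℕ → ℝ), (∀ k, x k ∈ E) ∧ (∀ k, 0 < l k) ∧
    Tendsto x atTop (𝓝 a) ∧ Tendsto (fun k => l k • (x k - a)) atTop (𝓝 v)}

/-- Normal cone of `E` at `a` (polar of the Peano tangent cone). -/
def NormalCone {n : ℕ} (E : Set (Euc n)) (a : Euc n) : Set (Euc n) :=
  {u | ∀ v ∈ PeanoTangentCone E a, inner ℝ v u ≤ (0 : ℝ)}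

/-- Extremal point of a set. -/
def IsExtremal {n : ℕ} (F : Set (Euc n)) (x₀ : Euc n) : Prop :=
  x₀ ∈ F ∧ ∀ x₁ ∈ F, ∀ x₂ ∈ F, ∀ t : ℝ, 0 < t → t < 1 →
    x₀ = (1 - t) • x₁ + t • x₂ → x₁ = x₂

/-- Kuratowski lower limit of a sequence of sets. -/
def KurLiminf {X : Type*} [TopologicalSpace X] (E : ℕ → Set X) : Set X :=
  {x | ∃ y : ℕ → X, (∀ k, y k ∈ E k) ∧ Tendsto y atTop (𝓝 x)}

/-- Kuratowski upper limit of a sequence of sets. -/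
def KurLimsup {X : Type*} [TopologicalSpace X] (E : ℕ → Set X) : Set X :=
  {x | ∃ (φ : ℕ → ℕ) (y : ℕ → X), StrictMono φ ∧ (∀ k, y k ∈ E (φ k)) ∧ Tendsto y atTop (𝓝 x)}

/-- Kuratowski convergence of a sequence of sets to `F`. -/
def KurConv {X : Type*} [TopologicalSpace X] (E : ℕ → Set X) (F : Set X) : Prop :=
  KurLiminf E = F ∧ KurLimsup E = F

def coneGen {n m : ℕ} (a : Fin m → Euc n) (s : Finset (Fin m)) : Set (Euc n) :=
  {x | ∃ l : Fin m → ℝ, (∀ i, 0 ≤ l i) ∧ (∀ i ∉ s, l i = 0) ∧ x = ∑ i, l i • a i}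

lemma coneGen_mono {n m : ℕ} (a : Fin m → Euc n) {t s : Finset (Fin m)} (h : t ⊆ s) :
    coneGen a t ⊆ coneGen a s := by
  rintro x ⟨l, h0, hs, rfl⟩
  exact ⟨l, h0, fun i hi => hs i (fun hit => hi (h hit)), rfl⟩

lemma coneGen_shrink {n m : ℕ} (a : Fin m → Euc n) (s : Finset (Fin m)) (x : Euc n)
    (l : Fin m → ℝ) (hl0 : ∀ i, 0 ≤ l i) (hls : ∀ i ∉ s, l i = 0)
    (hx : x = ∑ i, l i • a i) (μ : Fin m → ℝ) (hμs : ∀ i ∉ s, μ i = 0)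
    (hμsum : ∑ i, μ i • a i = 0) (hpos : ∃ i ∈ s, 0 < μ i) :
    ∃ j ∈ s, x ∈ coneGen a (s.erase j) := by
  classical
  set T := s.filter (fun i => 0 < μ i) with hT
  have hTne : T.Nonempty := by
    obtain ⟨i, his, hi⟩ := hpos
    exact ⟨i, Finset.mem_filter.mpr ⟨his, hi⟩⟩
  obtain ⟨j, hjT, hjmin⟩ := T.exists_min_image (fun i => l i / μ i) hTne
  obtain ⟨hjs, hμj⟩ := Finset.mem_filter.mp hjT
  set r := l j / μ j with hr
  have hr0 : 0 ≤ r := div_nonneg (hl0 j) hμj.le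
  refine ⟨j, hjs, fun i => l i - r * μ i, ?_, ?_, ?_⟩
  · intro i
    dsimp only
    by_cases hμi : 0 < μ i
    · have his : i ∈ s := by
        by_contra h
        exact absurd (hμs i h) (ne_of_gt hμi)
      have := hjmin i (Finset.mem_filter.mpr ⟨his, hμi⟩)
      have : r * μ i ≤ l i := (le_div_iff₀ hμi).mp this
      linarith
    · push_neg at hμi
      have : r * μ i ≤ 0 := mul_nonpos_of_nonneg_of_nonpos hr0 hμi
      have := hl0 i
      linarith
  · intro i hi
    dsimp only
    by_cases hij : i = j
    · subst hij
      rw [hr, div_mul_cancel₀ _ hμj.ne', sub_self]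
    · have his : i ∉ s := fun h => hi (Finset.mem_erase.mpr ⟨hij, h⟩)
      rw [hls i his, hμs i his, mul_zero, sub_zero]
  · rw [hx]
    rw [Finset.sum_congr rfl (fun i _ => sub_smul (l i) (r * μ i) (a i))]
    rw [Finset.sum_sub_distrib]
    have : ∑ i, (r * μ i) • a i = r • ∑ i, μ i • a i := by
      rw [Finset.smul_sum]
      exact Finset.sum_congr rfl fun i _ => (smul_smul r (μ i) (a i)).symm
    rw [this, hμsum, smul_zero, sub_zero]

lemma coneGen_caratheodory {n m : ℕ} (a : Fin m → Euc n) (s : Finset (Fin m)) :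
    ∀ x ∈ coneGen a s, ∃ t, t ⊆ s ∧
      LinearIndependent ℝ (fun i : t => a (i : Fin m)) ∧ x ∈ coneGen a t := by
  classical
  induction s using Finset.strongInductionOn with
  | _ s ih =>
    intro x hx
    by_cases hLI : LinearIndependent ℝ (fun i : s => a (i : Fin m))
    · exact ⟨s, subset_rfl, hLI, hx⟩
    · obtain ⟨g, hgsum, i₀, hgi₀⟩ := Fintype.not_linearIndependent_iff.mp hLI
      set μ : Fin m → ℝ := fun i => if h : i ∈ s then g ⟨i, h⟩ else 0 with hμdef
      have hμs : ∀ i ∉ s, μ i = 0 := fun i hi => dif_neg hi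
      have hμsum : ∑ i, μ i • a i = 0 := by
        rw [← Finset.sum_subset (Finset.subset_univ s)
          (fun i _ hi => by rw [hμs i hi, zero_smul])]
        rw [← Finset.sum_coe_sort s (fun i => μ i • a i)]
        rw [← hgsum]
        exact Finset.sum_congr rfl fun i _ => by simp [hμdef, i.2]
      obtain ⟨l, hl0, hls, hlx⟩ := hx
      have key : ∃ j ∈ s, x ∈ coneGen a (s.erase j) := by
        rcases lt_or_gt_of_ne hgi₀ with hneg | hpos
        · refine coneGen_shrink a s x l hl0 hls hlx (fun i => -μ i)
            (fun i hi => by simp only [hμs i hi, neg_zero])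
            (by simp only [neg_smul, Finset.sum_neg_distrib, hμsum, neg_zero])
            ⟨i₀, i₀.2, by simp [hμdef, i₀.2]; exact hneg⟩
        · exact coneGen_shrink a s x l hl0 hls hlx μ hμs hμsum
            ⟨i₀, i₀.2, by simp [hμdef, i₀.2]; exact hpos⟩
      obtain ⟨j, hjs, hx'⟩ := key
      obtain ⟨t, hts, hLIt, hxt⟩ := ih (s.erase j) (Finset.erase_ssubset hjs) x hx'
      exact ⟨t, hts.trans (Finset.erase_subset j s), hLIt, hxt⟩

lemma isClosed_coneGen_of_indep {n m : ℕ} (a : Fin m → Euc n) (t : Finset (Fin m))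
    (h : LinearIndependent ℝ (fun i : t => a (i : Fin m))) : IsClosed (coneGen a t) := by
  classical
  let L : (↥t → ℝ) →ₗ[ℝ] Euc n :=
    { toFun := fun g => ∑ i : ↥t, g i • a (i : Fin m)
      map_add' := fun g₁ g₂ => by simp [add_smul, Finset.sum_add_distrib]
      map_smul' := fun c g => by simp [smul_smul, Finset.smul_sum] }
  have hker : LinearMap.ker L = ⊥ := by
    rw [LinearMap.ker_eq_bot']
    intro g hg
    funext i
    exact Fintype.linearIndependent_iff.mp h g hg i
  have hemb := LinearMap.isClosedEmbedding_of_injective hker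
  have himg : coneGen a t = L '' {g : ↥t → ℝ | ∀ i, 0 ≤ g i} := by
    ext x
    constructor
    · rintro ⟨l, hl0, hlt, rfl⟩
      refine ⟨fun i => l i, fun i => hl0 i, ?_⟩
      show ∑ i : ↥t, l i • a (i : Fin m) = ∑ i, l i • a i
      rw [Finset.sum_coe_sort t (fun i => l i • a i)]
      exact Finset.sum_subset (Finset.subset_univ t)
        (fun i _ hi => by rw [hlt i hi, zero_smul])
    · rintro ⟨g, hg, rfl⟩
      refine ⟨fun i => if h : i ∈ t then g ⟨i, h⟩ else 0,
        fun i => by dsimp only; split <;> [exact hg _; rfl], fun i hi => dif_neg hi, ?_⟩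
      show (∑ i : ↥t, g i • a (i : Fin m)) = ∑ i, (if h : i ∈ t then g ⟨i, h⟩ else 0) • a i
      rw [← Finset.sum_subset (Finset.subset_univ t)
        (fun i _ hi => by rw [dif_neg hi, zero_smul])]
      rw [← Finset.sum_coe_sort t (fun i => (if h : i ∈ t then g ⟨i, h⟩ else 0) • a i)]
      exact (Finset.sum_congr rfl fun i _ => by rw [dif_pos i.2]).symm
  rw [himg]
  refine hemb.isClosedMap _ ?_
  rw [Set.setOf_forall]
  exact isClosed_iInter fun i => isClosed_le continuous_const (continuous_apply i)

lemma isClosed_coneGen {n m : ℕ} (a : Fin m → Euc n) (s : Finset (Fin m)) :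
    IsClosed (coneGen a s) := by
  classical
  have : coneGen a s = ⋃ t ∈ {t : Finset (Fin m) |
      t ⊆ s ∧ LinearIndependent ℝ (fun i : t => a (i : Fin m))}, coneGen a t := by
    apply Set.Subset.antisymm
    · intro x hx
      obtain ⟨t, hts, hLI, hxt⟩ := coneGen_caratheodory a s x hx
      exact Set.mem_biUnion ⟨hts, hLI⟩ hxt
    · exact Set.iUnion₂_subset fun t ht => coneGen_mono a ht.1
  rw [this]
  exact Set.Finite.isClosed_biUnion (Set.toFinite _)
    (fun t ht => isClosed_coneGen_of_indep a t ht.2)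

theorem stmt_3 {n m : ℕ} (a : Fin m → Euc n) (b : Fin m → ℝ)
    (E : Set (Euc n)) (hE : E = {x | ∀ i, inner ℝ (a i) x ≤ b i})
    (w : Euc n) (hw : w ∈ E) :
    NormalCone E w =
      {u | ∃ l : Fin m → ℝ, (∀ i, 0 ≤ l i) ∧
        (∀ i, inner ℝ (a i) w ≠ b i → l i = 0) ∧ u = ∑ i, l i • a i} := by
  classical
  subst hE
  set J : Finset (Fin m) := Finset.univ.filter (fun i => (inner ℝ (a i) w : ℝ) = b i) with hJ
  have hmemJ : ∀ i, i ∈ J ↔ (inner ℝ (a i) w : ℝ) = b i := by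
    intro i; simp [hJ]
  have hgap : ∀ i, (inner ℝ (a i) w : ℝ) ≠ b i → 0 < b i - inner ℝ (a i) w := by
    intro i hi; exact sub_pos.mpr (lt_of_le_of_ne (hw i) hi)
  have hRHS : {u | ∃ l : Fin m → ℝ, (∀ i, 0 ≤ l i) ∧
      (∀ i, (inner ℝ (a i) w : ℝ) ≠ b i → l i = 0) ∧ u = ∑ i, l i • a i} = coneGen a J := by
    ext u
    constructor
    · rintro ⟨l, h0, hz, rfl⟩
      exact ⟨l, h0, fun i hi => hz i (by simpa [hmemJ] using hi), rfl⟩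
    · rintro ⟨l, h0, hz, rfl⟩
      exact ⟨l, h0, fun i hi => hz i (by simpa [hmemJ] using hi), rfl⟩
  rw [hRHS]
  apply Set.Subset.antisymm
  · -- NormalCone ⊆ cone
    intro u hu
    by_contra hnot
    set K : ConvexCone ℝ (Euc n) :=
      { carrier := coneGen a J
        smul_mem' := by
          rintro c hc x ⟨l, h0, hz, rfl⟩
          refine ⟨fun i => c * l i, fun i => mul_nonneg hc.le (h0 i),
            fun i hi => by dsimp only; rw [hz i hi, mul_zero], ?_⟩
          rw [Finset.smul_sum]
          exact Finset.sum_congr rfl fun i _ => by dsimp only; rw [smul_smul]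
        add_mem' := by
          rintro x ⟨l, h0, hz, rfl⟩ y ⟨l', h0', hz', rfl⟩
          refine ⟨fun i => l i + l' i, fun i => add_nonneg (h0 i) (h0' i),
            fun i hi => by dsimp only; rw [hz i hi, hz' i hi, add_zero], ?_⟩
          rw [← Finset.sum_add_distrib]
          exact Finset.sum_congr rfl fun i _ => by dsimp only; rw [add_smul] } with hK
    have hKne : (K : Set (Euc n)).Nonempty :=
      ⟨0, fun _ => (0 : ℝ), fun _ => le_rfl, fun _ _ => rfl, by simp⟩
    have hKc : IsClosed (K : Set (Euc n)) := isClosed_coneGen a J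
    have hK0 : (0 : Euc n) ∈ K := ⟨fun _ => (0 : ℝ), fun _ => le_rfl, fun _ _ => rfl, by simp⟩
    obtain ⟨y, hy1, hy2⟩ :=
      ProperCone.hyperplane_separation' (C := ⟨K.toPointedCone hK0, hKc⟩) (x₀ := u) hnot
    set v : Euc n := -y with hv
    have hvJ : ∀ i ∈ J, (inner ℝ (a i) v : ℝ) ≤ 0 := by
      intro i hi
      have hai : a i ∈ K := by
        refine ⟨fun j => if j = i then 1 else 0,
          fun j => by dsimp only; split <;> norm_num,
          fun j hj => by dsimp only; rw [if_neg]; rintro rfl; exact hj hi, ?_⟩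
        simp [ite_smul]
      have h1 := hy1 (a i) hai
      rw [hv, inner_neg_right]
      linarith
    have hvu : 0 < (inner ℝ v u : ℝ) := by
      rw [hv, inner_neg_left, real_inner_comm]; linarith
    obtain ⟨δ, hδ0, hδ⟩ : ∃ δ : ℝ, 0 < δ ∧ ∀ i, (inner ℝ (a i) w : ℝ) ≠ b i →
        δ * inner ℝ (a i) v ≤ b i - inner ℝ (a i) w := by
      set T := Finset.univ.filter
        (fun i => (inner ℝ (a i) w : ℝ) ≠ b i ∧ 0 < (inner ℝ (a i) v : ℝ)) with hT
      rcases T.eq_empty_or_nonempty with hTe | hTne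
      · refine ⟨1, one_pos, fun i hi => ?_⟩
        have hiv : (inner ℝ (a i) v : ℝ) ≤ 0 := by
          by_contra hc
          push_neg at hc
          have hiT : i ∈ T := Finset.mem_filter.mpr ⟨Finset.mem_univ i, hi, hc⟩
          rw [hTe] at hiT
          exact absurd hiT (Finset.notMem_empty i)
        nlinarith [hgap i hi]
      · obtain ⟨j, hjT, hjmin⟩ := T.exists_min_image
          (fun i => (b i - inner ℝ (a i) w) / inner ℝ (a i) v) hTne
        obtain ⟨hj1, hj2⟩ : (inner ℝ (a j) w : ℝ) ≠ b j ∧ 0 < (inner ℝ (a j) v : ℝ) :=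
          (Finset.mem_filter.mp hjT).2
        set δ := (b j - (inner ℝ (a j) w : ℝ)) / inner ℝ (a j) v with hδdef
        have hδp : 0 < δ := div_pos (hgap j hj1) hj2
        refine ⟨δ, hδp, fun i hi => ?_⟩
        by_cases hiv : 0 < (inner ℝ (a i) v : ℝ)
        · have hle := hjmin i (Finset.mem_filter.mpr ⟨Finset.mem_univ i, hi, hiv⟩)
          exact (le_div_iff₀ hiv).mp hle
        · push_neg at hiv
          nlinarith [hgap i hi]
    have hvT : v ∈ PeanoTangentCone {x | ∀ i, (inner ℝ (a i) x : ℝ) ≤ b i} w := by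
      refine ⟨fun k => w + (δ / ((k : ℝ) + 1)) • v, fun k => ((k : ℝ) + 1) / δ,
        ?_, ?_, ?_, ?_⟩
      · intro k
        simp only [Set.mem_setOf_eq]
        intro i
        have hk1 : (0 : ℝ) < (k : ℝ) + 1 := by positivity
        rw [inner_add_right, real_inner_smul_right]
        by_cases hact : (inner ℝ (a i) w : ℝ) = b i
        · have hvi : (inner ℝ (a i) v : ℝ) ≤ 0 := hvJ i ((hmemJ i).mpr hact)
          have hrpos : 0 < δ / ((k : ℝ) + 1) := by positivity
          nlinarith
        · have h1 := hδ i hact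
          by_cases hiv : 0 ≤ (inner ℝ (a i) v : ℝ)
          · have hfrac : δ / ((k : ℝ) + 1) ≤ δ := by
              rw [div_le_iff₀ hk1]; nlinarith
            nlinarith
          · push_neg at hiv
            have hrpos : 0 < δ / ((k : ℝ) + 1) := by positivity
            nlinarith [hgap i hact]
      · intro k
        exact div_pos (by positivity) hδ0
      · have h1 : Tendsto (fun k : ℕ => δ / ((k : ℝ) + 1)) atTop (𝓝 0) := by
          have h2 := tendsto_one_div_add_atTop_nhds_zero_nat.const_mul δ
          rw [mul_zero] at h2
          exact h2.congr fun k => by rw [mul_one_div]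
        have h2 := h1.smul_const v
        rw [zero_smul] at h2
        have h3 := (tendsto_const_nhds (x := w) (f := (atTop : Filter ℕ))).add h2
        simpa using h3
      · have heq : (fun k : ℕ => (((k : ℝ) + 1) / δ) •
            ((w + (δ / ((k : ℝ) + 1)) • v) - w)) = fun _ => v := by
          funext k
          have hk1 : ((k : ℝ) + 1) ≠ 0 := by positivity
          rw [add_sub_cancel_left, smul_smul]
          have : (((k : ℝ) + 1) / δ) * (δ / ((k : ℝ) + 1)) = 1 := by
            field_simp
          rw [this, one_smul]
        rw [heq]
        exact tendsto_const_nhds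
    exact absurd (hu v hvT) (not_le.mpr hvu)
  · -- cone ⊆ NormalCone
    rintro u ⟨l, h0, hz, rfl⟩
    intro v hv
    obtain ⟨x, ls, hxE, hls, hxw, hconv⟩ := hv
    have hterm : ∀ i, l i * (inner ℝ v (a i) : ℝ) ≤ 0 := by
      intro i
      by_cases hiJ : i ∈ J
      · have hact : (inner ℝ (a i) w : ℝ) = b i := (hmemJ i).mp hiJ
        have hiv : (inner ℝ (a i) v : ℝ) ≤ 0 := by
          have htends : Tendsto (fun k => (inner ℝ (a i) (ls k • (x k - w)) : ℝ)) atTop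
              (𝓝 (inner ℝ (a i) v)) := tendsto_const_nhds.inner hconv
          refine le_of_tendsto htends (Filter.Eventually.of_forall fun k => ?_)
          rw [real_inner_smul_right, inner_sub_right]
          have h1 : (inner ℝ (a i) (x k) : ℝ) ≤ b i := hxE k i
          exact mul_nonpos_of_nonneg_of_nonpos (hls k).le (by rw [hact]; linarith)
        rw [real_inner_comm] at hiv
        exact mul_nonpos_of_nonneg_of_nonpos (h0 i) hiv
      · rw [hz i hiJ, zero_mul]
    calc (inner ℝ v (∑ i, l i • a i) : ℝ) = ∑ i, l i * inner ℝ v (a i) := by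
          rw [inner_sum]
          exact Finset.sum_congr rfl fun i _ => real_inner_smul_right v (a i) (l i)
      _ ≤ 0 := Finset.sum_nonpos fun i _ => hterm i
end
end

section
/- Let A : ℝⁿ → ℝᵐ be a linear map of rank n defining a (possibly unbounded) nonempty polyhedron E = {x : A x ≤ b}, and let c ∈ ℝⁿ. Then the linear functional f(x) = ⟨c, x⟩ attains its minimum on E if and only if −c belongs to the union over all vertices w ∈ E* of the normal cones N_w(E). Moreover, the minimum is attained exactly at those vertices w with −c ∈ N_w(E). -/
open Filter Topology Metric Set

noncomputable section

lemma aux_convex {n m : ℕ} (a : Fin m → Euc n) (b : Fin m → ℝ) :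
    Convex ℝ {x : Euc n | ∀ i, inner ℝ (a i) x ≤ b i} := by
  intro x hx y hy s t hs ht hst
  intro i
  have : inner ℝ (a i) (s • x + t • y) = s * inner ℝ (a i) x + t * inner ℝ (a i) y := by
    rw [inner_add_right, real_inner_smul_right, real_inner_smul_right]
  rw [this]
  calc s * inner ℝ (a i) x + t * inner ℝ (a i) y ≤ s * b i + t * b i := by
        gcongr <;> [exact hx i; exact hy i]
    _ = b i := by rw [← add_mul, hst, one_mul]

lemma aux_tangent {n : ℕ} {E : Set (Euc n)} (hconv : Convex ℝ E) {w x : Euc n}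
    (hw : w ∈ E) (hx : x ∈ E) : x - w ∈ PeanoTangentCone E w := by
  refine ⟨fun k => w + ((k : ℝ) + 1)⁻¹ • (x - w), fun k => (k : ℝ) + 1, fun k => ?_,
    fun k => by positivity, ?_, ?_⟩
  · have h1 : (0:ℝ) ≤ ((k : ℝ) + 1)⁻¹ := by positivity
    have h2 : ((k : ℝ) + 1)⁻¹ ≤ 1 := by
      rw [inv_le_one_iff₀]; right; linarith [Nat.cast_nonneg (α := ℝ) k]
    have := hconv hw hx (by linarith : (0:ℝ) ≤ 1 - ((k : ℝ) + 1)⁻¹) h1 (by ring)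
    convert this using 1
    module
  · have h : Tendsto (fun k : ℕ => ((k : ℝ) + 1)⁻¹) atTop (𝓝 0) := by
      simpa using tendsto_one_div_add_atTop_nhds_zero_nat (𝕜 := ℝ)
    have := (h.smul_const (x - w)).const_add w
    simpa using this
  · have : ∀ k : ℕ, ((k : ℝ) + 1) • ((w + ((k : ℝ) + 1)⁻¹ • (x - w)) - w) = x - w := by
      intro k
      have hk : ((k : ℝ) + 1) ≠ 0 := by positivity
      rw [add_sub_cancel_left, smul_smul, mul_inv_cancel₀ hk, one_smul]
    simp only [this]
    exact tendsto_const_nhds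

lemma aux_min_iff {n m : ℕ} (a : Fin m → Euc n) (b : Fin m → ℝ)
    (E : Set (Euc n)) (hE : E = {x | ∀ i, inner ℝ (a i) x ≤ b i})
    (c : Euc n) {w : Euc n} (hw : w ∈ E) :
    (∀ x ∈ E, inner ℝ c w ≤ (inner ℝ c x : ℝ)) ↔ -c ∈ NormalCone E w := by
  constructor
  · intro hmin v hv
    obtain ⟨x, l, hxE, hl, hxw, hlim⟩ := hv
    have hle : ∀ k, inner ℝ (l k • (x k - w)) (-c) ≤ (0:ℝ) := by
      intro k
      have : inner ℝ (l k • (x k - w)) (-c) = l k * (inner ℝ c w - inner ℝ c (x k)) := by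
        rw [real_inner_smul_left, inner_neg_right, inner_sub_left,
          real_inner_comm (x k) c, real_inner_comm w c]
        ring
      rw [this]
      have := hmin (x k) (hxE k)
      have := (hl k).le
      nlinarith [hmin (x k) (hxE k), (hl k).le]
    have hcont : Tendsto (fun k => inner ℝ (l k • (x k - w)) (-c) : ℕ → ℝ) atTop
        (𝓝 (inner ℝ v (-c))) := hlim.inner tendsto_const_nhds
    exact le_of_tendsto hcont (Eventually.of_forall hle)
  · intro hnc x hx
    have hconv : Convex ℝ E := hE ▸ aux_convex a b
    have := hnc (x - w) (aux_tangent hconv hw hx)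
    rw [inner_neg_right, inner_sub_left] at this
    have h1 : (inner ℝ x c : ℝ) = inner ℝ c x := real_inner_comm c x
    have h2 : (inner ℝ w c : ℝ) = inner ℝ c w := real_inner_comm c w
    linarith


lemma aux_span_inner_zero {n : ℕ} (S : Set (Euc n)) {u : Euc n}
    (h : ∀ v ∈ S, inner ℝ v u = (0:ℝ)) :
    ∀ v ∈ Submodule.span ℝ S, inner ℝ v u = (0:ℝ) := by
  intro v hv
  induction hv using Submodule.span_induction with
  | mem v hv => exact h v hv
  | zero => simp
  | add v w _ _ hv hw => rw [inner_add_left, hv, hw]; ring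
  | smul r v _ hv => rw [real_inner_smul_left, hv]; ring

lemma aux_extremal_of_span {n m : ℕ} (a : Fin m → Euc n) (b : Fin m → ℝ)
    (E : Set (Euc n)) (hE : E = {x | ∀ i, inner ℝ (a i) x ≤ b i})
    {x : Euc n} (hx : x ∈ E)
    (hspan : Submodule.span ℝ (a '' {i | inner ℝ (a i) x = b i}) = ⊤) :
    IsExtremal E x := by
  refine ⟨hx, ?_⟩
  intro x₁ h₁ x₂ h₂ t ht0 ht1 hxeq
  rw [hE] at h₁ h₂
  have key : ∀ i, inner ℝ (a i) x = b i →
      inner ℝ (a i) x₁ = b i ∧ inner ℝ (a i) x₂ = b i := by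
    intro i hi
    have e : (inner ℝ (a i) x : ℝ) = (1-t) * inner ℝ (a i) x₁ + t * inner ℝ (a i) x₂ := by
      rw [hxeq, inner_add_right, real_inner_smul_right, real_inner_smul_right]
    have le1 : (inner ℝ (a i) x₁ : ℝ) ≤ b i := h₁ i
    have le2 : (inner ℝ (a i) x₂ : ℝ) ≤ b i := h₂ i
    constructor <;> nlinarith
  have horth : ∀ v ∈ (a '' {i | inner ℝ (a i) x = b i}), inner ℝ v (x₁ - x₂) = (0:ℝ) := by
    rintro v ⟨i, hi, rfl⟩
    rw [inner_sub_right, (key i hi).1, (key i hi).2, sub_self]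
  have := aux_span_inner_zero _ horth (x₁ - x₂) (by rw [hspan]; trivial)
  rw [real_inner_self_eq_norm_sq] at this
  have : x₁ - x₂ = 0 := by
    by_contra h
    have := norm_pos_iff.mpr h
    nlinarith [this]
  exact sub_eq_zero.mp this

lemma aux_exists_extremal_min {n m : ℕ} (a : Fin m → Euc n) (b : Fin m → ℝ)
    (hrank : Submodule.span ℝ (Set.range a) = ⊤)
    (E : Set (Euc n)) (hE : E = {x | ∀ i, inner ℝ (a i) x ≤ b i})
    (c : Euc n) :
    ∀ N : ℕ, ∀ x ∈ E, (∀ y ∈ E, inner ℝ c x ≤ (inner ℝ c y : ℝ)) →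
      (Finset.univ.filter (fun i => inner ℝ (a i) x ≠ b i)).card ≤ N →
      ∃ w, IsExtremal E w ∧ ∀ y ∈ E, inner ℝ c w ≤ (inner ℝ c y : ℝ) := by
  intro N
  induction N with
  | zero =>
    intro x hx hmin hcard
    refine ⟨x, aux_extremal_of_span a b E hE hx ?_, hmin⟩
    have hall : ∀ i, inner ℝ (a i) x = b i := by
      intro i
      by_contra hi
      have : i ∈ Finset.univ.filter (fun i => inner ℝ (a i) x ≠ b i) :=
        Finset.mem_filter.mpr ⟨Finset.mem_univ i, hi⟩
      have := Finset.card_pos.mpr ⟨i, this⟩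
      omega
    have : a '' {i | inner ℝ (a i) x = b i} = Set.range a := by
      ext v
      constructor
      · rintro ⟨i, _, rfl⟩; exact ⟨i, rfl⟩
      · rintro ⟨i, rfl⟩; exact ⟨i, hall i, rfl⟩
    rw [this, hrank]
  | succ N ih =>
    intro x hx hmin hcard
    by_cases hspan : Submodule.span ℝ (a '' {i | inner ℝ (a i) x = b i}) = ⊤
    · exact ⟨x, aux_extremal_of_span a b E hE hx hspan, hmin⟩
    · -- find d ≠ 0 orthogonal to all active a i
      have hbot : (Submodule.span ℝ (a '' {i | inner ℝ (a i) x = b i}))ᗮ ≠ ⊥ := by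
        intro h
        exact hspan (Submodule.orthogonal_eq_bot_iff.mp h)
      obtain ⟨d₀, hd₀mem, hd₀ne⟩ := Submodule.exists_mem_ne_zero_of_ne_bot hbot
      -- replace d₀ by d with inner ℝ c d ≤ 0
      set d : Euc n := if (inner ℝ c d₀ : ℝ) ≤ 0 then d₀ else -d₀ with hd_def
      have hdne : d ≠ 0 := by
        rw [hd_def]; split <;> simpa
      have hdc : (inner ℝ c d : ℝ) ≤ 0 := by
        rw [hd_def]; split
        · assumption
        · rw [inner_neg_right]; linarith
      have hdmem : d ∈ (Submodule.span ℝ (a '' {i | inner ℝ (a i) x = b i}))ᗮ := by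
        rw [hd_def]; split
        · exact hd₀mem
        · exact Submodule.neg_mem _ hd₀mem
      have hdact : ∀ i, inner ℝ (a i) x = b i → inner ℝ (a i) d = (0:ℝ) := by
        intro i hi
        have : a i ∈ Submodule.span ℝ (a '' {i | inner ℝ (a i) x = b i}) :=
          Submodule.subset_span ⟨i, hi, rfl⟩
        exact (Submodule.mem_orthogonal _ _).mp hdmem (a i) this
      -- some j with inner ℝ (a j) d ≠ 0
      have hj0 : ∃ j, inner ℝ (a j) d ≠ (0:ℝ) := by
        by_contra h
        push_neg at h
        apply hdne
        have : d ∈ (Submodule.span ℝ (Set.range a))ᗮ := by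
          rw [Submodule.mem_orthogonal]
          intro u hu
          exact aux_span_inner_zero _ (by rintro v ⟨j, rfl⟩; exact h j) u hu
        rw [hrank] at this
        simpa using this
      obtain ⟨j₀, hj₀⟩ := hj0
      -- choose direction s
      have hs : ∃ s : Euc n, (inner ℝ c s : ℝ) ≤ 0 ∧
          (∀ i, inner ℝ (a i) x = b i → inner ℝ (a i) s = (0:ℝ)) ∧
          (∃ j, (0:ℝ) < inner ℝ (a j) s) := by
        by_cases hpos : ∃ j, (0:ℝ) < inner ℝ (a j) d
        · exact ⟨d, hdc, hdact, hpos⟩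
        · push_neg at hpos
          -- ray x + t d stays in E, so inner ℝ c d ≥ 0, hence = 0
          have hray : ∀ t : ℝ, 0 ≤ t → x + t • d ∈ E := by
            intro t ht
            rw [hE]
            intro i
            have : (inner ℝ (a i) (x + t • d) : ℝ) = inner ℝ (a i) x + t * inner ℝ (a i) d := by
              rw [inner_add_right, real_inner_smul_right]
            rw [this]
            have h1 : (inner ℝ (a i) x : ℝ) ≤ b i := by rw [hE] at hx; exact hx i
            nlinarith [hpos i]
          have hge : (0:ℝ) ≤ inner ℝ c d := by
            have := hmin (x + (1:ℝ) • d) (hray 1 zero_le_one)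
            rw [inner_add_right, real_inner_smul_right] at this
            linarith
          refine ⟨-d, by rw [inner_neg_right]; linarith, ?_, ?_⟩
          · intro i hi; rw [inner_neg_right, hdact i hi, neg_zero]
          · refine ⟨j₀, ?_⟩
            rw [inner_neg_right]
            rcases lt_or_gt_of_ne hj₀ with h | h
            · linarith
            · exact absurd h (not_lt.mpr (hpos j₀))
      obtain ⟨s, hsc, hsact, j₁, hj₁⟩ := hs
      -- minimum ratio
      set P : Finset (Fin m) := Finset.univ.filter (fun j => (0:ℝ) < inner ℝ (a j) s) with hP
      have hPne : P.Nonempty := ⟨j₁, Finset.mem_filter.mpr ⟨Finset.mem_univ _, hj₁⟩⟩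
      obtain ⟨k₀, hk₀P, hk₀min⟩ :=
        P.exists_min_image (fun j => (b j - inner ℝ (a j) x) / inner ℝ (a j) s) hPne
      have hk₀s : (0:ℝ) < inner ℝ (a k₀) s := by
        simpa [hP] using hk₀P
      have hk₀inact : (inner ℝ (a k₀) x : ℝ) < b k₀ := by
        rcases lt_or_eq_of_le (show (inner ℝ (a k₀) x : ℝ) ≤ b k₀ by rw [hE] at hx; exact hx k₀) with h | h
        · exact h
        · exfalso; rw [hsact k₀ h] at hk₀s; exact lt_irrefl _ hk₀s
      set T : ℝ := (b k₀ - inner ℝ (a k₀) x) / inner ℝ (a k₀) s with hT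
      have hTpos : 0 < T := div_pos (by linarith) hk₀s
      set x' : Euc n := x + T • s with hx'
      have hx'E : x' ∈ E := by
        rw [hE]
        intro i
        have heq : (inner ℝ (a i) x' : ℝ) = inner ℝ (a i) x + T * inner ℝ (a i) s := by
          rw [hx', inner_add_right, real_inner_smul_right]
        rw [heq]
        have h1 : (inner ℝ (a i) x : ℝ) ≤ b i := by rw [hE] at hx; exact hx i
        by_cases hip : (0:ℝ) < inner ℝ (a i) s
        · have hiP : i ∈ P := Finset.mem_filter.mpr ⟨Finset.mem_univ _, hip⟩
          have := hk₀min i hiP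
          have h2 : T * inner ℝ (a i) s ≤ ((b i - inner ℝ (a i) x) / inner ℝ (a i) s) * inner ℝ (a i) s := by
            apply mul_le_mul_of_nonneg_right _ hip.le
            exact this
          rw [div_mul_cancel₀ _ (ne_of_gt hip)] at h2
          linarith
        · push_neg at hip
          nlinarith
      have hx'min : ∀ y ∈ E, inner ℝ c x' ≤ (inner ℝ c y : ℝ) := by
        intro y hy
        have heq : (inner ℝ c x' : ℝ) = inner ℝ c x + T * inner ℝ c s := by
          rw [hx', inner_add_right, real_inner_smul_right]
        have := hmin y hy
        nlinarith
      -- active constraints strictly increase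
      have hsubset : Finset.univ.filter (fun i => inner ℝ (a i) x' ≠ b i) ⊆
          Finset.univ.filter (fun i => inner ℝ (a i) x ≠ b i) := by
        intro i hi
        simp only [Finset.mem_filter, Finset.mem_univ, true_and] at hi ⊢
        intro hact
        apply hi
        rw [hx', inner_add_right, real_inner_smul_right, hsact i hact, mul_zero, add_zero]
        exact hact
      have hk₀new : inner ℝ (a k₀) x' = b k₀ := by
        rw [hx', inner_add_right, real_inner_smul_right, hT,
          div_mul_cancel₀ _ (ne_of_gt hk₀s)]
        ring
      have hk₀old : k₀ ∈ Finset.univ.filter (fun i => inner ℝ (a i) x ≠ b i) := by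
        simp only [Finset.mem_filter, Finset.mem_univ, true_and]
        exact ne_of_lt hk₀inact
      have hk₀notnew : k₀ ∉ Finset.univ.filter (fun i => inner ℝ (a i) x' ≠ b i) :=
        fun h => (Finset.mem_filter.mp h).2 hk₀new
      have hcard' : (Finset.univ.filter (fun i => inner ℝ (a i) x' ≠ b i)).card ≤ N := by
        have hssub : Finset.univ.filter (fun i => inner ℝ (a i) x' ≠ b i) ⊂
            Finset.univ.filter (fun i => inner ℝ (a i) x ≠ b i) :=
          ⟨hsubset, fun h => hk₀notnew (h hk₀old)⟩
        have := Finset.card_lt_card hssub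
        omega
      exact ih x' hx'E hx'min hcard'

theorem stmt_4 {n m : ℕ} (a : Fin m → Euc n) (b : Fin m → ℝ)
    (hrank : Submodule.span ℝ (Set.range a) = ⊤)
    (E : Set (Euc n)) (hE : E = {x | ∀ i, inner ℝ (a i) x ≤ b i}) (hne : E.Nonempty)
    (c : Euc n) :
    ((∃ x₀ ∈ E, ∀ x ∈ E, inner ℝ c x₀ ≤ (inner ℝ c x : ℝ)) ↔
      -c ∈ ⋃ w ∈ {w | IsExtremal E w}, NormalCone E w) ∧
    (∀ w, IsExtremal E w →
      ((∀ x ∈ E, inner ℝ c w ≤ (inner ℝ c x : ℝ)) ↔ -c ∈ NormalCone E w)) := by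
  constructor
  · constructor
    · rintro ⟨x₀, hx₀, hmin⟩
      obtain ⟨w, hwext, hwmin⟩ := aux_exists_extremal_min a b hrank E hE c m x₀ hx₀ hmin
        ((Finset.card_filter_le _ _).trans (by simp))
      exact Set.mem_biUnion hwext ((aux_min_iff a b E hE c hwext.1).mp hwmin)
    · intro h
      rw [Set.mem_iUnion₂] at h
      obtain ⟨w, hwext, hnc⟩ := h
      exact ⟨w, hwext.1, (aux_min_iff a b E hE c hwext.1).mpr hnc⟩
  · intro w hwext
    exact aux_min_iff a b E hE c hwext.1
end
end

section
/- Let E = {x : A x ≤ b} be a nonempty polyhedron with E* ≠ ∅. Then E is unbounded if and only if the union over vertices w ∈ E* of the normal cones N_w(E) is not all of ℝⁿ. -/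
open Filter Topology Metric Set

noncomputable section

lemma extremal_iff_mem_extremePoints {n : ℕ} {E : Set (Euc n)} {w : Euc n} :
    IsExtremal E w ↔ w ∈ E.extremePoints ℝ := by
  constructor
  · rintro ⟨hw, h⟩
    rw [mem_extremePoints]
    refine ⟨hw, fun x₁ hx₁ x₂ hx₂ hseg => ?_⟩
    rw [openSegment_eq_image] at hseg
    obtain ⟨t, ⟨ht0, ht1⟩, rfl⟩ := hseg
    have := h x₁ hx₁ x₂ hx₂ t ht0 ht1 rfl
    subst this
    constructor <;> · simp [← add_smul]
  · rintro ⟨hw, h⟩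
    refine ⟨hw, fun x₁ hx₁ x₂ hx₂ t ht0 ht1 heq => ?_⟩
    have hmem : w ∈ openSegment ℝ x₁ x₂ := by
      rw [openSegment_eq_image]; exact ⟨t, ⟨ht0, ht1⟩, heq.symm⟩
    have h1 := h hx₁ hx₂ hmem
    have h2 := h hx₂ hx₁ (openSegment_symm ℝ x₁ x₂ ▸ hmem)
    rw [h1, h2]

/-- A maximizer of `⟪u, ·⟫` on `E` has `u` in its normal cone. -/
lemma mem_normalCone_of_isMaxOn {n : ℕ} {E : Set (Euc n)} {w u : Euc n}
    (hmax : ∀ x ∈ E, (inner ℝ u x : ℝ) ≤ inner ℝ u w) : u ∈ NormalCone E w := by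
  rintro v ⟨x, l, hxE, hl, -, htend⟩
  have h1 : Tendsto (fun k => (inner ℝ (l k • (x k - w)) u : ℝ)) atTop (𝓝 (inner ℝ v u)) :=
    (Tendsto.inner htend tendsto_const_nhds)
  refine le_of_tendsto h1 (Eventually.of_forall fun k => ?_)
  have : (inner ℝ (x k - w) u : ℝ) ≤ 0 := by
    have h2 := hmax (x k) (hxE k)
    rw [inner_sub_left, real_inner_comm u (x k), real_inner_comm u w]
    linarith
  calc (inner ℝ (l k • (x k - w)) u : ℝ) = l k * inner ℝ (x k - w) u := by
        rw [real_inner_smul_left]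
    _ ≤ 0 := mul_nonpos_of_nonneg_of_nonpos (hl k).le this


set_option maxHeartbeats 1000000 in
theorem stmt_5 {n m : ℕ} (a : Fin m → Euc n) (b : Fin m → ℝ) (ha : a ≠ 0)
    (E : Set (Euc n)) (hE : E = {x | ∀ i, inner ℝ (a i) x ≤ b i}) (hne : E.Nonempty)
    (hstar : {w | IsExtremal E w}.Nonempty) :
    ¬ Bornology.IsBounded E ↔
      (⋃ w ∈ {w | IsExtremal E w}, NormalCone E w) ≠ Set.univ := by
  have hEclosed : IsClosed E := by
    rw [hE, setOf_forall]
    exact isClosed_iInter fun i =>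
      isClosed_le (continuous_const.inner continuous_id) continuous_const
  have hEconv : Convex ℝ E := by
    rw [hE, setOf_forall]
    exact convex_iInter fun i => convex_halfSpace_le
      ⟨fun x y => inner_add_right _ _ _, fun c x => real_inner_smul_right _ _ c⟩ (b i)
  constructor
  · -- unbounded → union ≠ univ
    intro hub
    -- get recession direction d
    rw [Metric.isBounded_iff_subset_closedBall 0] at hub
    push_neg at hub
    have hx : ∀ k : ℕ, ∃ x ∈ E, (k : ℝ) + 1 < ‖x‖ := by
      intro k
      obtain ⟨x, hxE, hxn⟩ := not_subset.1 (hub ((k : ℝ) + 1))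
      exact ⟨x, hxE, by simpa [mem_closedBall, dist_eq_norm, not_le] using hxn⟩
    choose x hxE hxn using hx
    have hxpos : ∀ k, (0 : ℝ) < ‖x k‖ := fun k =>
      lt_of_le_of_lt (by positivity) (hxn k)
    set d : ℕ → Euc n := fun k => ‖x k‖⁻¹ • x k with hd
    have hdsphere : ∀ k, d k ∈ sphere (0 : Euc n) 1 := by
      intro k
      simp [hd, norm_smul, abs_of_pos (inv_pos.2 (hxpos k)),
        inv_mul_cancel₀ (hxpos k).ne']
    obtain ⟨v, hvmem, φ, hφ, hvt⟩ :=
      (isCompact_sphere (0 : Euc n) 1).tendsto_subseq hdsphere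
    have hvne : v ≠ 0 := by
      intro h
      rw [h] at hvmem
      simp at hvmem
    -- v is a recession direction: ⟪a i, v⟫ ≤ 0
    have hrec : ∀ i, (inner ℝ (a i) v : ℝ) ≤ 0 := by
      intro i
      have h1 : Tendsto (fun k => (inner ℝ (a i) (d (φ k)) : ℝ)) atTop (𝓝 (inner ℝ (a i) v)) :=
        Tendsto.inner tendsto_const_nhds hvt
      have h2 : Tendsto (fun k => ‖x (φ k)‖⁻¹ * b i) atTop (𝓝 0) := by
        have hnt : Tendsto (fun k => ‖x (φ k)‖) atTop atTop := by
          apply tendsto_atTop_mono (fun k => (hxn (φ k)).le)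
          apply tendsto_atTop_add_const_right
          exact tendsto_natCast_atTop_atTop.comp hφ.tendsto_atTop
        simpa using (hnt.inv_tendsto_atTop).mul_const (b i)
      refine le_of_tendsto_of_tendsto h1 h2 (Eventually.of_forall fun k => ?_)
      have hxEi : (inner ℝ (a i) (x (φ k)) : ℝ) ≤ b i := by
        have := hxE (φ k); rw [hE] at this; exact this i
      calc (inner ℝ (a i) (d (φ k)) : ℝ) = ‖x (φ k)‖⁻¹ * inner ℝ (a i) (x (φ k)) := by
            simp only [hd, real_inner_smul_right]
        _ ≤ ‖x (φ k)‖⁻¹ * b i :=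
            mul_le_mul_of_nonneg_left hxEi (inv_pos.2 (hxpos (φ k))).le
    -- v ∉ union
    intro hcontra
    have hv : v ∈ ⋃ w ∈ {w | IsExtremal E w}, NormalCone E w := hcontra ▸ mem_univ v
    obtain ⟨w, hw, hvn⟩ := mem_iUnion₂.1 hv
    have hwE : w ∈ E := hw.1
    -- v ∈ tangent cone at w
    have hvt : v ∈ PeanoTangentCone E w := by
      refine ⟨fun k => w + ((k : ℝ) + 1)⁻¹ • v, fun k => (k : ℝ) + 1, ?_, ?_, ?_, ?_⟩
      · intro k
        rw [hE]
        intro i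
        have hwEi : (inner ℝ (a i) w : ℝ) ≤ b i := by
          have := hwE; rw [hE] at this; exact this i
        have hk : (0 : ℝ) < (k : ℝ) + 1 := by positivity
        rw [inner_add_right, real_inner_smul_right]
        nlinarith [hrec i, inv_pos.2 hk]
      · intro k; positivity
      · have : Tendsto (fun k : ℕ => ((k : ℝ) + 1)⁻¹ • v) atTop (𝓝 ((0:ℝ) • v)) := by
          apply Tendsto.smul_const
          exact (tendsto_atTop_add_const_right _ 1 tendsto_natCast_atTop_atTop).inv_tendsto_atTop
        simpa using tendsto_const_nhds.add this
      · have : ∀ k : ℕ, ((k : ℝ) + 1) • (w + ((k : ℝ) + 1)⁻¹ • v - w) = v := by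
          intro k
          have hk : ((k : ℝ) + 1) ≠ 0 := by positivity
          rw [add_sub_cancel_left, smul_smul, mul_inv_cancel₀ hk, one_smul]
        simpa only [this] using (tendsto_const_nhds : Tendsto (fun _ : ℕ => v) atTop (𝓝 v))
    have := hvn v hvt
    rw [real_inner_self_eq_norm_sq] at this
    have : ‖v‖ = 0 := by nlinarith [norm_nonneg v]
    exact hvne (norm_eq_zero.1 this)
  · -- union ≠ univ → unbounded ; contrapositive: bounded → union = univ
    intro hne' hb
    apply hne'
    rw [eq_univ_iff_forall]
    intro u
    have hEcomp : IsCompact E := Metric.isCompact_of_isClosed_isBounded hEclosed hb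
    obtain ⟨w0, hw0E, hmax⟩ := hEcomp.exists_isMaxOn hne
      (((innerSL ℝ u).continuous.comp continuous_id).continuousOn)
    set B : Set (Euc n) := {x ∈ E | ∀ y ∈ E, (innerSL ℝ u) y ≤ (innerSL ℝ u) x} with hB
    have hexp : IsExposed ℝ E B := fun _ => ⟨innerSL ℝ u, rfl⟩
    have hw0B : w0 ∈ B := ⟨hw0E, fun y hy => hmax hy⟩
    obtain ⟨w, hwB⟩ := (hexp.isCompact hEcomp).extremePoints_nonempty ⟨w0, hw0B⟩
    have hwE : w ∈ E.extremePoints ℝ :=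
      hexp.isExtreme.extremePoints_subset_extremePoints hwB
    have hwmem : w ∈ B := extremePoints_subset hwB
    refine mem_iUnion₂.2 ⟨w, extremal_iff_mem_extremePoints.2 hwE, ?_⟩
    exact mem_normalCone_of_isMaxOn fun x hx => hwmem.2 x hx
end
end

section
/- Let f(x) = ⟨c, x⟩ be a linear functional on ℝⁿ and C ⊂ ℝⁿ a nonempty closed set with affine hull V. Then f attains its infimum over C if and only if there exists a point x₀ in the relative boundary of C (the boundary of C computed within V) with f(x₀) = inf_{x ∈ C} f(x), or C has empty relative boundary (i.e. C = V) and f is constant on C. -/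
open Filter Topology Metric Set

noncomputable section

theorem key_const {n : ℕ} (c : Euc n) (C : Set (Euc n)) (x₀ : Euc n)
    (hx₀ : x₀ ∈ intrinsicInterior ℝ C)
    (hmin : ∀ x ∈ C, inner ℝ c x₀ ≤ (inner ℝ c x : ℝ)) :
    ∀ x ∈ C, (inner ℝ c x : ℝ) = inner ℝ c x₀ := by
  obtain ⟨y, hy, hyx⟩ := mem_intrinsicInterior.1 hx₀
  obtain ⟨ε, hε, hball⟩ := Metric.isOpen_iff.1 isOpen_interior y hy
  intro x hx
  refine le_antisymm ?_ (hmin x hx)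
  set t : ℝ := ε / (2 * (‖x₀ - x‖ + 1)) with ht
  have hnorm : (0:ℝ) < ‖x₀ - x‖ + 1 := by positivity
  have htpos : 0 < t := by positivity
  set p : Euc n := x₀ + t • (x₀ - x) with hp
  have hx₀span : x₀ ∈ affineSpan ℝ C := hyx ▸ y.2
  have hpspan : p ∈ affineSpan ℝ C := by
    have := AffineMap.lineMap_mem (Q := affineSpan ℝ C) (p₀ := x) (p₁ := x₀) (1 + t)
      (subset_affineSpan ℝ C hx) hx₀span
    convert this using 1
    simp only [AffineMap.lineMap_apply, vsub_eq_sub, vadd_eq_add, hp]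
    module
  have hdist : dist p x₀ < ε := by
    rw [dist_eq_norm]
    have : p - x₀ = t • (x₀ - x) := by simp [hp]
    rw [this, norm_smul, Real.norm_eq_abs, abs_of_pos htpos, ht]
    calc ε / (2 * (‖x₀ - x‖ + 1)) * ‖x₀ - x‖
        ≤ ε / (2 * (‖x₀ - x‖ + 1)) * (‖x₀ - x‖ + 1) := by
          apply mul_le_mul_of_nonneg_left (by linarith) (by positivity)
      _ = ε / 2 := by field_simp
      _ < ε := by linarith
  have hpC : p ∈ C := by
    have hw : (⟨p, hpspan⟩ : affineSpan ℝ C) ∈ Metric.ball y ε := by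
      rw [Metric.mem_ball, Subtype.dist_eq, hyx]
      exact hdist
    exact interior_subset (s := (Subtype.val ⁻¹' C : Set (affineSpan ℝ C))) (hball hw)
  have := hmin p hpC
  have hip : (inner ℝ c p : ℝ) = inner ℝ c x₀ + t * ((inner ℝ c x₀ : ℝ) - inner ℝ c x) := by
    rw [hp, inner_add_right, real_inner_smul_right, inner_sub_right]
  rw [hip] at this
  nlinarith

theorem stmt_6 {n : ℕ} (c : Euc n) (C : Set (Euc n)) (hC : IsClosed C) (hne : C.Nonempty) :
    (∃ x₀ ∈ C, ∀ x ∈ C, inner ℝ c x₀ ≤ (inner ℝ c x : ℝ)) ↔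
      ((∃ x₀ ∈ intrinsicFrontier ℝ C, x₀ ∈ C ∧ ∀ x ∈ C, inner ℝ c x₀ ≤ (inner ℝ c x : ℝ)) ∨
       (intrinsicFrontier ℝ C = ∅ ∧ ∀ x ∈ C, ∀ y ∈ C, (inner ℝ c x : ℝ) = inner ℝ c y)) := by
  have hclos : intrinsicClosure ℝ C = C :=
    IsClosed.intrinsicClosure (hC.preimage continuous_subtype_val)
  constructor
  · rintro ⟨x₀, hx₀C, hmin⟩
    by_cases hint : x₀ ∈ intrinsicInterior ℝ C
    · have hconst := key_const c C x₀ hint hmin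
      by_cases hfr : intrinsicFrontier ℝ C = ∅
      · exact Or.inr ⟨hfr, fun x hx y hy => (hconst x hx).trans (hconst y hy).symm⟩
      · obtain ⟨z, hz⟩ := Set.nonempty_iff_ne_empty.2 hfr
        have hzC : z ∈ C := intrinsicFrontier_subset hC hz
        refine Or.inl ⟨z, hz, hzC, fun x hx => ?_⟩
        rw [hconst z hzC]
        exact hmin x hx
    · have : x₀ ∈ intrinsicFrontier ℝ C := by
        rw [← intrinsicClosure_diff_intrinsicInterior]
        exact ⟨subset_intrinsicClosure hx₀C, hint⟩
      exact Or.inl ⟨x₀, this, hx₀C, hmin⟩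
  · rintro (⟨x₀, _, hx₀C, hmin⟩ | ⟨_, hconst⟩)
    · exact ⟨x₀, hx₀C, hmin⟩
    · obtain ⟨x₀, hx₀⟩ := hne
      exact ⟨x₀, hx₀, fun x hx => (hconst x₀ hx₀ x hx).le⟩
end
end
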